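/- arXiv:1509.02300 — 4 statements merged into one kernel-verified Lean document; each statement's English description precedes it below -/
import Mathlib

section
/- For each x ∈ S^6, let f(x) : ℝ^7 → ℝ^7 be the linear map induced on imaginary octonions by conjugation u ↦ (1/4)(e0+√3 x)u(e0−√3 x). Then f(x)^3 = id. -/
noncomputable section

/-- The octonions, realized by Cayley–Dickson doubling of the quaternions. -/
abbrev Octo := Quaternion ℝ × Quaternion ℝ

namespace Octo

/-- Octonion multiplication (Cayley–Dickson formula). -/
def mul' (x y : Octo) : Octo :=
  (x.1 * y.1 - star y.2 * x.2, y.2 * x.1 + x.2 * star y.1)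

/-- The unit octonion `e0`. -/
def one' : Octo := (1, 0)

/-- Octonionic conjugation. -/
def conj' (x : Octo) : Octo := (star x.1, -x.2)

/-- The real part of an octonion. -/
def re' (x : Octo) : ℝ := x.1.re

/-- The Euclidean inner product on the octonions `≅ ℝ^8`. -/
def dot (x y : Octo) : ℝ :=
  x.1.re * y.1.re + x.1.imI * y.1.imI + x.1.imJ * y.1.imJ + x.1.imK * y.1.imK +
  x.2.re * y.2.re + x.2.imI * y.2.imI + x.2.imJ * y.2.imJ + x.2.imK * y.2.imK

/-- The squared Euclidean norm of an octonion. -/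
def norm2 (x : Octo) : ℝ := dot x x

/-- The imaginary part of an octonion. -/
def im' (x : Octo) : Octo := x - (re' x) • one'

end Octo

/-- Conjugation by `e0 + √3·x` : `u ↦ (1/4)·((e0+√3x)·u)·(e0−√3x)`. -/
def conjMap (x : Octo) (u : Octo) : Octo :=
  (4 : ℝ)⁻¹ • Octo.mul' (Octo.mul' (Octo.one' + Real.sqrt 3 • x) u)
    (Octo.one' - Real.sqrt 3 • x)

/-- A quaternion built from its components, typed as `Quaternion ℝ`. -/
def Q (x y z w : ℝ) : Quaternion ℝ := ⟨x, y, z, w⟩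

@[simp] lemma Q_re (x y z w : ℝ) : (Q x y z w).re = x := rfl
@[simp] lemma Q_imI (x y z w : ℝ) : (Q x y z w).imI = y := rfl
@[simp] lemma Q_imJ (x y z w : ℝ) : (Q x y z w).imJ = z := rfl
@[simp] lemma Q_imK (x y z w : ℝ) : (Q x y z w).imK = w := rfl

lemma mk_eq_Q (x y z w : ℝ) : (⟨x, y, z, w⟩ : Quaternion ℝ) = Q x y z w := rfl

set_option maxHeartbeats 1000000 in
set_option maxRecDepth 20000 in
lemma conj_explicit (a b c d e f g u0 p q r t v w z : ℝ) :
    conjMap (⟨⟨0,a,b,c⟩, ⟨d,e,f,g⟩⟩ : Octo) (⟨⟨u0,p,q,r⟩, ⟨t,v,w,z⟩⟩ : Octo) =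
    (⟨⟨(1/4:ℝ)*u0 + (3/4:ℝ)*g^2*u0 + (3/4:ℝ)*f^2*u0 + (3/4:ℝ)*e^2*u0 + (3/4:ℝ)*d^2*u0 + (3/4:ℝ)*c^2*u0 + (3/4:ℝ)*b^2*u0 + (3/4:ℝ)*a^2*u0,
    (1/4:ℝ)*p + (-3/4:ℝ)*g^2*p + (-3/4:ℝ)*f^2*p + (-3/4:ℝ)*e^2*p + (-3/4:ℝ)*d^2*p + (-3/4:ℝ)*c^2*p + (-3/4:ℝ)*b^2*p + (3/2:ℝ)*a*g*z + (3/2:ℝ)*a*f*w + (3/2:ℝ)*a*e*v + (3/2:ℝ)*a*d*t + (3/2:ℝ)*a*c*r + (3/2:ℝ)*a*b*q + (3/4:ℝ)*a^2*p + (1/2:ℝ)*(Real.sqrt 3)*g*w + (-1/2:ℝ)*(Real.sqrt 3)*f*z + (-1/2:ℝ)*(Real.sqrt 3)*e*t + (1/2:ℝ)*(Real.sqrt 3)*d*v + (-1/2:ℝ)*(Real.sqrt 3)*c*q + (1/2:ℝ)*(Real.sqrt 3)*b*r,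
    (1/4:ℝ)*q + (-3/4:ℝ)*g^2*q + (-3/4:ℝ)*f^2*q + (-3/4:ℝ)*e^2*q + (-3/4:ℝ)*d^2*q + (-3/4:ℝ)*c^2*q + (3/2:ℝ)*b*g*z + (3/2:ℝ)*b*f*w + (3/2:ℝ)*b*e*v + (3/2:ℝ)*b*d*t + (3/2:ℝ)*b*c*r + (3/4:ℝ)*b^2*q + (3/2:ℝ)*a*b*p + (-3/4:ℝ)*a^2*q + (-1/2:ℝ)*(Real.sqrt 3)*g*v + (-1/2:ℝ)*(Real.sqrt 3)*f*t + (1/2:ℝ)*(Real.sqrt 3)*e*z + (1/2:ℝ)*(Real.sqrt 3)*d*w + (1/2:ℝ)*(Real.sqrt 3)*c*p + (-1/2:ℝ)*(Real.sqrt 3)*a*r,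
    (1/4:ℝ)*r + (-3/4:ℝ)*g^2*r + (-3/4:ℝ)*f^2*r + (-3/4:ℝ)*e^2*r + (-3/4:ℝ)*d^2*r + (3/2:ℝ)*c*g*z + (3/2:ℝ)*c*f*w + (3/2:ℝ)*c*e*v + (3/2:ℝ)*c*d*t + (3/4:ℝ)*c^2*r + (3/2:ℝ)*b*c*q + (-3/4:ℝ)*b^2*r + (3/2:ℝ)*a*c*p + (-3/4:ℝ)*a^2*r + (-1/2:ℝ)*(Real.sqrt 3)*g*t + (1/2:ℝ)*(Real.sqrt 3)*f*v + (-1/2:ℝ)*(Real.sqrt 3)*e*w + (1/2:ℝ)*(Real.sqrt 3)*d*z + (-1/2:ℝ)*(Real.sqrt 3)*b*p + (1/2:ℝ)*(Real.sqrt 3)*a*q⟩,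
    ⟨(1/4:ℝ)*t + (-3/4:ℝ)*g^2*t + (-3/4:ℝ)*f^2*t + (-3/4:ℝ)*e^2*t + (3/2:ℝ)*d*g*z + (3/2:ℝ)*d*f*w + (3/2:ℝ)*d*e*v + (3/4:ℝ)*d^2*t + (3/2:ℝ)*c*d*r + (-3/4:ℝ)*c^2*t + (3/2:ℝ)*b*d*q + (-3/4:ℝ)*b^2*t + (3/2:ℝ)*a*d*p + (-3/4:ℝ)*a^2*t + (1/2:ℝ)*(Real.sqrt 3)*g*r + (1/2:ℝ)*(Real.sqrt 3)*f*q + (1/2:ℝ)*(Real.sqrt 3)*e*p + (-1/2:ℝ)*(Real.sqrt 3)*c*z + (-1/2:ℝ)*(Real.sqrt 3)*b*w + (-1/2:ℝ)*(Real.sqrt 3)*a*v,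
    (1/4:ℝ)*v + (-3/4:ℝ)*g^2*v + (-3/4:ℝ)*f^2*v + (3/2:ℝ)*e*g*z + (3/2:ℝ)*e*f*w + (3/4:ℝ)*e^2*v + (3/2:ℝ)*d*e*t + (-3/4:ℝ)*d^2*v + (3/2:ℝ)*c*e*r + (-3/4:ℝ)*c^2*v + (3/2:ℝ)*b*e*q + (-3/4:ℝ)*b^2*v + (3/2:ℝ)*a*e*p + (-3/4:ℝ)*a^2*v + (1/2:ℝ)*(Real.sqrt 3)*g*q + (-1/2:ℝ)*(Real.sqrt 3)*f*r + (-1/2:ℝ)*(Real.sqrt 3)*d*p + (1/2:ℝ)*(Real.sqrt 3)*c*w + (-1/2:ℝ)*(Real.sqrt 3)*b*z + (1/2:ℝ)*(Real.sqrt 3)*a*t,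
    (1/4:ℝ)*w + (-3/4:ℝ)*g^2*w + (3/2:ℝ)*f*g*z + (3/4:ℝ)*f^2*w + (3/2:ℝ)*e*f*v + (-3/4:ℝ)*e^2*w + (3/2:ℝ)*d*f*t + (-3/4:ℝ)*d^2*w + (3/2:ℝ)*c*f*r + (-3/4:ℝ)*c^2*w + (3/2:ℝ)*b*f*q + (-3/4:ℝ)*b^2*w + (3/2:ℝ)*a*f*p + (-3/4:ℝ)*a^2*w + (-1/2:ℝ)*(Real.sqrt 3)*g*p + (1/2:ℝ)*(Real.sqrt 3)*e*r + (-1/2:ℝ)*(Real.sqrt 3)*d*q + (-1/2:ℝ)*(Real.sqrt 3)*c*v + (1/2:ℝ)*(Real.sqrt 3)*b*t + (1/2:ℝ)*(Real.sqrt 3)*a*z,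
    (1/4:ℝ)*z + (3/4:ℝ)*g^2*z + (3/2:ℝ)*f*g*w + (-3/4:ℝ)*f^2*z + (3/2:ℝ)*e*g*v + (-3/4:ℝ)*e^2*z + (3/2:ℝ)*d*g*t + (-3/4:ℝ)*d^2*z + (3/2:ℝ)*c*g*r + (-3/4:ℝ)*c^2*z + (3/2:ℝ)*b*g*q + (-3/4:ℝ)*b^2*z + (3/2:ℝ)*a*g*p + (-3/4:ℝ)*a^2*z + (1/2:ℝ)*(Real.sqrt 3)*f*p + (-1/2:ℝ)*(Real.sqrt 3)*e*q + (-1/2:ℝ)*(Real.sqrt 3)*d*r + (1/2:ℝ)*(Real.sqrt 3)*c*t + (1/2:ℝ)*(Real.sqrt 3)*b*v + (-1/2:ℝ)*(Real.sqrt 3)*a*w⟩⟩ : Octo) := by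
  have hs : Real.sqrt 3 * Real.sqrt 3 = 3 := Real.mul_self_sqrt (by norm_num)
  simp only [conjMap, Octo.mul', Octo.one', Prod.smul_fst, Prod.smul_snd,
    Prod.mk_add_mk, Prod.mk_sub_mk, Prod.fst, Prod.snd]
  simp only [mk_eq_Q]
  simp [Prod.ext_iff, Quaternion.ext_iff, QuaternionAlgebra.ext_iff, Quaternion.re_one,
    Quaternion.imI_one, Quaternion.imJ_one, Quaternion.imK_one]
  refine ⟨⟨?_, ?_, ?_, ?_⟩, ?_, ?_, ?_, ?_⟩
  · linear_combination ((1/4:ℝ)*g^2*u0 + (1/4:ℝ)*f^2*u0 + (1/4:ℝ)*e^2*u0 + (1/4:ℝ)*d^2*u0 + (1/4:ℝ)*c^2*u0 + (1/4:ℝ)*b^2*u0 + (1/4:ℝ)*a^2*u0) * hs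
  · linear_combination ((-1/4:ℝ)*g^2*p + (-1/4:ℝ)*f^2*p + (-1/4:ℝ)*e^2*p + (-1/4:ℝ)*d^2*p + (-1/4:ℝ)*c^2*p + (-1/4:ℝ)*b^2*p + (1/2:ℝ)*a*g*z + (1/2:ℝ)*a*f*w + (1/2:ℝ)*a*e*v + (1/2:ℝ)*a*d*t + (1/2:ℝ)*a*c*r + (1/2:ℝ)*a*b*q + (1/4:ℝ)*a^2*p) * hs
  · linear_combination ((-1/4:ℝ)*g^2*q + (-1/4:ℝ)*f^2*q + (-1/4:ℝ)*e^2*q + (-1/4:ℝ)*d^2*q + (-1/4:ℝ)*c^2*q + (1/2:ℝ)*b*g*z + (1/2:ℝ)*b*f*w + (1/2:ℝ)*b*e*v + (1/2:ℝ)*b*d*t + (1/2:ℝ)*b*c*r + (1/4:ℝ)*b^2*q + (1/2:ℝ)*a*b*p + (-1/4:ℝ)*a^2*q) * hs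
  · linear_combination ((-1/4:ℝ)*g^2*r + (-1/4:ℝ)*f^2*r + (-1/4:ℝ)*e^2*r + (-1/4:ℝ)*d^2*r + (1/2:ℝ)*c*g*z + (1/2:ℝ)*c*f*w + (1/2:ℝ)*c*e*v + (1/2:ℝ)*c*d*t + (1/4:ℝ)*c^2*r + (1/2:ℝ)*b*c*q + (-1/4:ℝ)*b^2*r + (1/2:ℝ)*a*c*p + (-1/4:ℝ)*a^2*r) * hs
  · linear_combination ((-1/4:ℝ)*g^2*t + (-1/4:ℝ)*f^2*t + (-1/4:ℝ)*e^2*t + (1/2:ℝ)*d*g*z + (1/2:ℝ)*d*f*w + (1/2:ℝ)*d*e*v + (1/4:ℝ)*d^2*t + (1/2:ℝ)*c*d*r + (-1/4:ℝ)*c^2*t + (1/2:ℝ)*b*d*q + (-1/4:ℝ)*b^2*t + (1/2:ℝ)*a*d*p + (-1/4:ℝ)*a^2*t) * hs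
  · linear_combination ((-1/4:ℝ)*g^2*v + (-1/4:ℝ)*f^2*v + (1/2:ℝ)*e*g*z + (1/2:ℝ)*e*f*w + (1/4:ℝ)*e^2*v + (1/2:ℝ)*d*e*t + (-1/4:ℝ)*d^2*v + (1/2:ℝ)*c*e*r + (-1/4:ℝ)*c^2*v + (1/2:ℝ)*b*e*q + (-1/4:ℝ)*b^2*v + (1/2:ℝ)*a*e*p + (-1/4:ℝ)*a^2*v) * hs
  · linear_combination ((-1/4:ℝ)*g^2*w + (1/2:ℝ)*f*g*z + (1/4:ℝ)*f^2*w + (1/2:ℝ)*e*f*v + (-1/4:ℝ)*e^2*w + (1/2:ℝ)*d*f*t + (-1/4:ℝ)*d^2*w + (1/2:ℝ)*c*f*r + (-1/4:ℝ)*c^2*w + (1/2:ℝ)*b*f*q + (-1/4:ℝ)*b^2*w + (1/2:ℝ)*a*f*p + (-1/4:ℝ)*a^2*w) * hs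
  · linear_combination ((1/4:ℝ)*g^2*z + (1/2:ℝ)*f*g*w + (-1/4:ℝ)*f^2*z + (1/2:ℝ)*e*g*v + (-1/4:ℝ)*e^2*z + (1/2:ℝ)*d*g*t + (-1/4:ℝ)*d^2*z + (1/2:ℝ)*c*g*r + (-1/4:ℝ)*c^2*z + (1/2:ℝ)*b*g*q + (-1/4:ℝ)*b^2*z + (1/2:ℝ)*a*g*p + (-1/4:ℝ)*a^2*z) * hs

set_option maxHeartbeats 2000000 in
set_option maxRecDepth 20000 in
lemma conj2_explicit (a b c d e f g u0 p q r t v w z : ℝ)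
    (hx' : a^2+b^2+c^2+d^2+e^2+f^2+g^2 = 1) :
    conjMap (⟨⟨0,a,b,c⟩, ⟨d,e,f,g⟩⟩ : Octo)
      (conjMap (⟨⟨0,a,b,c⟩, ⟨d,e,f,g⟩⟩ : Octo) (⟨⟨u0,p,q,r⟩, ⟨t,v,w,z⟩⟩ : Octo)) =
    (⟨⟨u0,
    p + (-3/2:ℝ)*g^2*p + (-3/2:ℝ)*f^2*p + (-3/2:ℝ)*e^2*p + (-3/2:ℝ)*d^2*p + (-3/2:ℝ)*c^2*p + (-3/2:ℝ)*b^2*p + (3/2:ℝ)*a*g*z + (3/2:ℝ)*a*f*w + (3/2:ℝ)*a*e*v + (3/2:ℝ)*a*d*t + (3/2:ℝ)*a*c*r + (3/2:ℝ)*a*b*q + (-1/2:ℝ)*(Real.sqrt 3)*g*w + (1/2:ℝ)*(Real.sqrt 3)*f*z + (1/2:ℝ)*(Real.sqrt 3)*e*t + (-1/2:ℝ)*(Real.sqrt 3)*d*v + (1/2:ℝ)*(Real.sqrt 3)*c*q + (-1/2:ℝ)*(Real.sqrt 3)*b*r,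
    (-1/2:ℝ)*q + (3/2:ℝ)*b*g*z + (3/2:ℝ)*b*f*w + (3/2:ℝ)*b*e*v + (3/2:ℝ)*b*d*t + (3/2:ℝ)*b*c*r + (3/2:ℝ)*b^2*q + (3/2:ℝ)*a*b*p + (1/2:ℝ)*(Real.sqrt 3)*g*v + (1/2:ℝ)*(Real.sqrt 3)*f*t + (-1/2:ℝ)*(Real.sqrt 3)*e*z + (-1/2:ℝ)*(Real.sqrt 3)*d*w + (-1/2:ℝ)*(Real.sqrt 3)*c*p + (1/2:ℝ)*(Real.sqrt 3)*a*r,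
    (-1/2:ℝ)*r + (3/2:ℝ)*c*g*z + (3/2:ℝ)*c*f*w + (3/2:ℝ)*c*e*v + (3/2:ℝ)*c*d*t + (3/2:ℝ)*c^2*r + (3/2:ℝ)*b*c*q + (3/2:ℝ)*a*c*p + (1/2:ℝ)*(Real.sqrt 3)*g*t + (-1/2:ℝ)*(Real.sqrt 3)*f*v + (1/2:ℝ)*(Real.sqrt 3)*e*w + (-1/2:ℝ)*(Real.sqrt 3)*d*z + (1/2:ℝ)*(Real.sqrt 3)*b*p + (-1/2:ℝ)*(Real.sqrt 3)*a*q⟩,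
    ⟨(-1/2:ℝ)*t + (3/2:ℝ)*d*g*z + (3/2:ℝ)*d*f*w + (3/2:ℝ)*d*e*v + (3/2:ℝ)*d^2*t + (3/2:ℝ)*c*d*r + (3/2:ℝ)*b*d*q + (3/2:ℝ)*a*d*p + (-1/2:ℝ)*(Real.sqrt 3)*g*r + (-1/2:ℝ)*(Real.sqrt 3)*f*q + (-1/2:ℝ)*(Real.sqrt 3)*e*p + (1/2:ℝ)*(Real.sqrt 3)*c*z + (1/2:ℝ)*(Real.sqrt 3)*b*w + (1/2:ℝ)*(Real.sqrt 3)*a*v,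
    (-1/2:ℝ)*v + (3/2:ℝ)*e*g*z + (3/2:ℝ)*e*f*w + (3/2:ℝ)*e^2*v + (3/2:ℝ)*d*e*t + (3/2:ℝ)*c*e*r + (3/2:ℝ)*b*e*q + (3/2:ℝ)*a*e*p + (-1/2:ℝ)*(Real.sqrt 3)*g*q + (1/2:ℝ)*(Real.sqrt 3)*f*r + (1/2:ℝ)*(Real.sqrt 3)*d*p + (-1/2:ℝ)*(Real.sqrt 3)*c*w + (1/2:ℝ)*(Real.sqrt 3)*b*z + (-1/2:ℝ)*(Real.sqrt 3)*a*t,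
    (-1/2:ℝ)*w + (3/2:ℝ)*f*g*z + (3/2:ℝ)*f^2*w + (3/2:ℝ)*e*f*v + (3/2:ℝ)*d*f*t + (3/2:ℝ)*c*f*r + (3/2:ℝ)*b*f*q + (3/2:ℝ)*a*f*p + (1/2:ℝ)*(Real.sqrt 3)*g*p + (-1/2:ℝ)*(Real.sqrt 3)*e*r + (1/2:ℝ)*(Real.sqrt 3)*d*q + (1/2:ℝ)*(Real.sqrt 3)*c*v + (-1/2:ℝ)*(Real.sqrt 3)*b*t + (-1/2:ℝ)*(Real.sqrt 3)*a*z,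
    (-1/2:ℝ)*z + (3/2:ℝ)*g^2*z + (3/2:ℝ)*f*g*w + (3/2:ℝ)*e*g*v + (3/2:ℝ)*d*g*t + (3/2:ℝ)*c*g*r + (3/2:ℝ)*b*g*q + (3/2:ℝ)*a*g*p + (-1/2:ℝ)*(Real.sqrt 3)*f*p + (1/2:ℝ)*(Real.sqrt 3)*e*q + (1/2:ℝ)*(Real.sqrt 3)*d*r + (-1/2:ℝ)*(Real.sqrt 3)*c*t + (-1/2:ℝ)*(Real.sqrt 3)*b*v + (1/2:ℝ)*(Real.sqrt 3)*a*w⟩⟩ : Octo) := by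
  have hs : Real.sqrt 3 * Real.sqrt 3 = 3 := Real.mul_self_sqrt (by norm_num)
  rw [conj_explicit, conj_explicit]
  simp only [mk_eq_Q, Prod.ext_iff, Quaternion.ext_iff, QuaternionAlgebra.ext_iff, Q_re, Q_imI, Q_imJ, Q_imK]
  refine ⟨⟨?_, ?_, ?_, ?_⟩, ?_, ?_, ?_, ?_⟩
  · linear_combination (0) * hs + ((15/16:ℝ)*u0 + (9/16:ℝ)*g^2*u0 + (9/16:ℝ)*f^2*u0 + (9/16:ℝ)*e^2*u0 + (9/16:ℝ)*d^2*u0 + (9/16:ℝ)*c^2*u0 + (9/16:ℝ)*b^2*u0 + (9/16:ℝ)*a^2*u0) * hx'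
  · linear_combination ((-1/4:ℝ)*g^2*p + (-1/4:ℝ)*f^2*p + (-1/4:ℝ)*e^2*p + (-1/4:ℝ)*d^2*p + (-1/4:ℝ)*c^2*p + (-1/4:ℝ)*b^2*p + (1/4:ℝ)*a*g*z + (1/4:ℝ)*a*f*w + (1/4:ℝ)*a*e*v + (1/4:ℝ)*a*d*t + (1/4:ℝ)*a*c*r + (1/4:ℝ)*a*b*q) * hs + ((15/16:ℝ)*p + (9/16:ℝ)*g^2*p + (9/16:ℝ)*f^2*p + (9/16:ℝ)*e^2*p + (9/16:ℝ)*d^2*p + (9/16:ℝ)*c^2*p + (9/16:ℝ)*b^2*p + (9/16:ℝ)*a^2*p + (-3/4:ℝ)*(Real.sqrt 3)*g*w + (3/4:ℝ)*(Real.sqrt 3)*f*z + (3/4:ℝ)*(Real.sqrt 3)*e*t + (-3/4:ℝ)*(Real.sqrt 3)*d*v + (3/4:ℝ)*(Real.sqrt 3)*c*q + (-3/4:ℝ)*(Real.sqrt 3)*b*r) * hx'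
  · linear_combination ((-1/4:ℝ)*g^2*q + (-1/4:ℝ)*f^2*q + (-1/4:ℝ)*e^2*q + (-1/4:ℝ)*d^2*q + (-1/4:ℝ)*c^2*q + (1/4:ℝ)*b*g*z + (1/4:ℝ)*b*f*w + (1/4:ℝ)*b*e*v + (1/4:ℝ)*b*d*t + (1/4:ℝ)*b*c*r + (1/4:ℝ)*a*b*p + (-1/4:ℝ)*a^2*q) * hs + ((-9/16:ℝ)*q + (9/16:ℝ)*g^2*q + (9/16:ℝ)*f^2*q + (9/16:ℝ)*e^2*q + (9/16:ℝ)*d^2*q + (9/16:ℝ)*c^2*q + (9/16:ℝ)*b^2*q + (9/16:ℝ)*a^2*q + (3/4:ℝ)*(Real.sqrt 3)*g*v + (3/4:ℝ)*(Real.sqrt 3)*f*t + (-3/4:ℝ)*(Real.sqrt 3)*e*z + (-3/4:ℝ)*(Real.sqrt 3)*d*w + (-3/4:ℝ)*(Real.sqrt 3)*c*p + (3/4:ℝ)*(Real.sqrt 3)*a*r) * hx'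
  · linear_combination ((-1/4:ℝ)*g^2*r + (-1/4:ℝ)*f^2*r + (-1/4:ℝ)*e^2*r + (-1/4:ℝ)*d^2*r + (1/4:ℝ)*c*g*z + (1/4:ℝ)*c*f*w + (1/4:ℝ)*c*e*v + (1/4:ℝ)*c*d*t + (1/4:ℝ)*b*c*q + (-1/4:ℝ)*b^2*r + (1/4:ℝ)*a*c*p + (-1/4:ℝ)*a^2*r) * hs + ((-9/16:ℝ)*r + (9/16:ℝ)*g^2*r + (9/16:ℝ)*f^2*r + (9/16:ℝ)*e^2*r + (9/16:ℝ)*d^2*r + (9/16:ℝ)*c^2*r + (9/16:ℝ)*b^2*r + (9/16:ℝ)*a^2*r + (3/4:ℝ)*(Real.sqrt 3)*g*t + (-3/4:ℝ)*(Real.sqrt 3)*f*v + (3/4:ℝ)*(Real.sqrt 3)*e*w + (-3/4:ℝ)*(Real.sqrt 3)*d*z + (3/4:ℝ)*(Real.sqrt 3)*b*p + (-3/4:ℝ)*(Real.sqrt 3)*a*q) * hx'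
  · linear_combination ((-1/4:ℝ)*g^2*t + (-1/4:ℝ)*f^2*t + (-1/4:ℝ)*e^2*t + (1/4:ℝ)*d*g*z + (1/4:ℝ)*d*f*w + (1/4:ℝ)*d*e*v + (1/4:ℝ)*c*d*r + (-1/4:ℝ)*c^2*t + (1/4:ℝ)*b*d*q + (-1/4:ℝ)*b^2*t + (1/4:ℝ)*a*d*p + (-1/4:ℝ)*a^2*t) * hs + ((-9/16:ℝ)*t + (9/16:ℝ)*g^2*t + (9/16:ℝ)*f^2*t + (9/16:ℝ)*e^2*t + (9/16:ℝ)*d^2*t + (9/16:ℝ)*c^2*t + (9/16:ℝ)*b^2*t + (9/16:ℝ)*a^2*t + (-3/4:ℝ)*(Real.sqrt 3)*g*r + (-3/4:ℝ)*(Real.sqrt 3)*f*q + (-3/4:ℝ)*(Real.sqrt 3)*e*p + (3/4:ℝ)*(Real.sqrt 3)*c*z + (3/4:ℝ)*(Real.sqrt 3)*b*w + (3/4:ℝ)*(Real.sqrt 3)*a*v) * hx'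
  · linear_combination ((-1/4:ℝ)*g^2*v + (-1/4:ℝ)*f^2*v + (1/4:ℝ)*e*g*z + (1/4:ℝ)*e*f*w + (1/4:ℝ)*d*e*t + (-1/4:ℝ)*d^2*v + (1/4:ℝ)*c*e*r + (-1/4:ℝ)*c^2*v + (1/4:ℝ)*b*e*q + (-1/4:ℝ)*b^2*v + (1/4:ℝ)*a*e*p + (-1/4:ℝ)*a^2*v) * hs + ((-9/16:ℝ)*v + (9/16:ℝ)*g^2*v + (9/16:ℝ)*f^2*v + (9/16:ℝ)*e^2*v + (9/16:ℝ)*d^2*v + (9/16:ℝ)*c^2*v + (9/16:ℝ)*b^2*v + (9/16:ℝ)*a^2*v + (-3/4:ℝ)*(Real.sqrt 3)*g*q + (3/4:ℝ)*(Real.sqrt 3)*f*r + (3/4:ℝ)*(Real.sqrt 3)*d*p + (-3/4:ℝ)*(Real.sqrt 3)*c*w + (3/4:ℝ)*(Real.sqrt 3)*b*z + (-3/4:ℝ)*(Real.sqrt 3)*a*t) * hx'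
  · linear_combination ((-1/4:ℝ)*g^2*w + (1/4:ℝ)*f*g*z + (1/4:ℝ)*e*f*v + (-1/4:ℝ)*e^2*w + (1/4:ℝ)*d*f*t + (-1/4:ℝ)*d^2*w + (1/4:ℝ)*c*f*r + (-1/4:ℝ)*c^2*w + (1/4:ℝ)*b*f*q + (-1/4:ℝ)*b^2*w + (1/4:ℝ)*a*f*p + (-1/4:ℝ)*a^2*w) * hs + ((-9/16:ℝ)*w + (9/16:ℝ)*g^2*w + (9/16:ℝ)*f^2*w + (9/16:ℝ)*e^2*w + (9/16:ℝ)*d^2*w + (9/16:ℝ)*c^2*w + (9/16:ℝ)*b^2*w + (9/16:ℝ)*a^2*w + (3/4:ℝ)*(Real.sqrt 3)*g*p + (-3/4:ℝ)*(Real.sqrt 3)*e*r + (3/4:ℝ)*(Real.sqrt 3)*d*q + (3/4:ℝ)*(Real.sqrt 3)*c*v + (-3/4:ℝ)*(Real.sqrt 3)*b*t + (-3/4:ℝ)*(Real.sqrt 3)*a*z) * hx'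
  · linear_combination ((1/4:ℝ)*f*g*w + (-1/4:ℝ)*f^2*z + (1/4:ℝ)*e*g*v + (-1/4:ℝ)*e^2*z + (1/4:ℝ)*d*g*t + (-1/4:ℝ)*d^2*z + (1/4:ℝ)*c*g*r + (-1/4:ℝ)*c^2*z + (1/4:ℝ)*b*g*q + (-1/4:ℝ)*b^2*z + (1/4:ℝ)*a*g*p + (-1/4:ℝ)*a^2*z) * hs + ((-9/16:ℝ)*z + (9/16:ℝ)*g^2*z + (9/16:ℝ)*f^2*z + (9/16:ℝ)*e^2*z + (9/16:ℝ)*d^2*z + (9/16:ℝ)*c^2*z + (9/16:ℝ)*b^2*z + (9/16:ℝ)*a^2*z + (-3/4:ℝ)*(Real.sqrt 3)*f*p + (3/4:ℝ)*(Real.sqrt 3)*e*q + (3/4:ℝ)*(Real.sqrt 3)*d*r + (-3/4:ℝ)*(Real.sqrt 3)*c*t + (-3/4:ℝ)*(Real.sqrt 3)*b*v + (3/4:ℝ)*(Real.sqrt 3)*a*w) * hx'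

set_option maxHeartbeats 2000000 in
set_option maxRecDepth 20000 in
/-- For `x ∈ S⁶`, the map induced by conjugation by `e0+√3x` preserves the
imaginary octonions `≅ ℝ⁷` and its cube is the identity: `f(x)³ = id`. -/
theorem stmt4 (x : Octo) (him : Octo.re' x = 0) (hx : Octo.norm2 x = 1) :
    (∀ u, Octo.re' u = 0 → Octo.re' (conjMap x u) = 0) ∧
    (∀ u, Octo.re' u = 0 → conjMap x (conjMap x (conjMap x u)) = u) := by
  obtain ⟨⟨x0,a,b,c⟩,⟨d,e,f,g⟩⟩ := x
  simp only [Octo.re'] at him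
  subst him
  have hs : Real.sqrt 3 * Real.sqrt 3 = 3 := Real.mul_self_sqrt (by norm_num)
  have hx' : a^2+b^2+c^2+d^2+e^2+f^2+g^2 = 1 := by
    simp only [Octo.norm2, Octo.dot] at hx; linarith [hx, sq_nonneg a]
  constructor
  · rintro ⟨⟨u0,p,q,r⟩,⟨t,v,w,z⟩⟩ hu
    simp only [Octo.re'] at hu
    subst hu
    rw [conj_explicit]
    simp only [Octo.re']
    ring
  · rintro ⟨⟨u0,p,q,r⟩,⟨t,v,w,z⟩⟩ hu
    simp only [Octo.re'] at hu
    subst hu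
    rw [conj2_explicit a b c d e f g 0 p q r t v w z hx', conj_explicit]
    simp only [mk_eq_Q, Prod.ext_iff, Quaternion.ext_iff, QuaternionAlgebra.ext_iff, Q_re, Q_imI, Q_imJ, Q_imK]
    refine ⟨⟨?_, ?_, ?_, ?_⟩, ?_, ?_, ?_, ?_⟩
    · linear_combination (0) * hs + (0) * hx'
    · linear_combination ((1/4:ℝ)*g^2*p + (1/4:ℝ)*f^2*p + (1/4:ℝ)*e^2*p + (1/4:ℝ)*d^2*p + (1/4:ℝ)*c^2*p + (1/4:ℝ)*b^2*p + (-1/4:ℝ)*a*g*z + (-1/4:ℝ)*a*f*w + (-1/4:ℝ)*a*e*v + (-1/4:ℝ)*a*d*t + (-1/4:ℝ)*a*c*r + (-1/4:ℝ)*a*b*q) * hs + ((3/4:ℝ)*p + (9/8:ℝ)*g^2*p + (9/8:ℝ)*f^2*p + (9/8:ℝ)*e^2*p + (9/8:ℝ)*d^2*p + (9/8:ℝ)*c^2*p + (9/8:ℝ)*b^2*p + (9/8:ℝ)*a*g*z + (9/8:ℝ)*a*f*w + (9/8:ℝ)*a*e*v + (9/8:ℝ)*a*d*t + (9/8:ℝ)*a*c*r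 + (9/8:ℝ)*a*b*q + (3/8:ℝ)*(Real.sqrt 3)*g*w + (-3/8:ℝ)*(Real.sqrt 3)*f*z + (-3/8:ℝ)*(Real.sqrt 3)*e*t + (3/8:ℝ)*(Real.sqrt 3)*d*v + (-3/8:ℝ)*(Real.sqrt 3)*c*q + (3/8:ℝ)*(Real.sqrt 3)*b*r) * hx'
    · linear_combination ((1/4:ℝ)*g^2*q + (1/4:ℝ)*f^2*q + (1/4:ℝ)*e^2*q + (1/4:ℝ)*d^2*q + (1/4:ℝ)*c^2*q + (-1/4:ℝ)*b*g*z + (-1/4:ℝ)*b*f*w + (-1/4:ℝ)*b*e*v + (-1/4:ℝ)*b*d*t + (-1/4:ℝ)*b*c*r + (-1/4:ℝ)*a*b*p + (1/4:ℝ)*a^2*q) * hs + ((9/8:ℝ)*q + (9/8:ℝ)*b*g*z + (9/8:ℝ)*b*f*w + (9/8:ℝ)*b*e*v + (9/8:ℝ)*b*d*t + (9/8:ℝ)*b*c*r + (9/8:ℝ)*b^2*q + (-9/8:ℝ)*a*b*p + (-3/8:ℝ)*(Real.sqrt 3)*g*v + (-3/8:ℝ)*(Real.sqrt 3)*f*t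 + (3/8:ℝ)*(Real.sqrt 3)*e*z + (3/8:ℝ)*(Real.sqrt 3)*d*w + (-3/8:ℝ)*(Real.sqrt 3)*c*p + (-3/8:ℝ)*(Real.sqrt 3)*a*r) * hx'
    · linear_combination ((1/4:ℝ)*g^2*r + (1/4:ℝ)*f^2*r + (1/4:ℝ)*e^2*r + (1/4:ℝ)*d^2*r + (-1/4:ℝ)*c*g*z + (-1/4:ℝ)*c*f*w + (-1/4:ℝ)*c*e*v + (-1/4:ℝ)*c*d*t + (-1/4:ℝ)*b*c*q + (1/4:ℝ)*b^2*r + (-1/4:ℝ)*a*c*p + (1/4:ℝ)*a^2*r) * hs + ((9/8:ℝ)*r + (9/8:ℝ)*c*g*z + (9/8:ℝ)*c*f*w + (9/8:ℝ)*c*e*v + (9/8:ℝ)*c*d*t + (9/8:ℝ)*c^2*r + (9/8:ℝ)*b*c*q + (-9/8:ℝ)*a*c*p + (-3/8:ℝ)*(Real.sqrt 3)*g*t + (3/8:ℝ)*(Real.sqrt 3)*f*v + (-3/8:ℝ)*(Real.sqrt 3)*e*w + (3/8:ℝ)*(Real.sqrt 3)*d*z + (3/8:ℝ)*(Real.sqrt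 3)*b*p + (3/8:ℝ)*(Real.sqrt 3)*a*q) * hx'
    · linear_combination ((1/4:ℝ)*g^2*t + (1/4:ℝ)*f^2*t + (1/4:ℝ)*e^2*t + (-1/4:ℝ)*d*g*z + (-1/4:ℝ)*d*f*w + (-1/4:ℝ)*d*e*v + (-1/4:ℝ)*c*d*r + (1/4:ℝ)*c^2*t + (-1/4:ℝ)*b*d*q + (1/4:ℝ)*b^2*t + (-1/4:ℝ)*a*d*p + (1/4:ℝ)*a^2*t) * hs + ((9/8:ℝ)*t + (9/8:ℝ)*d*g*z + (9/8:ℝ)*d*f*w + (9/8:ℝ)*d*e*v + (9/8:ℝ)*d^2*t + (9/8:ℝ)*c*d*r + (9/8:ℝ)*b*d*q + (-9/8:ℝ)*a*d*p + (3/8:ℝ)*(Real.sqrt 3)*g*r + (3/8:ℝ)*(Real.sqrt 3)*f*q + (-3/8:ℝ)*(Real.sqrt 3)*e*p + (-3/8:ℝ)*(Real.sqrt 3)*c*z + (-3/8:ℝ)*(Real.sqrt 3)*b*w + (-3/8:ℝ)*(Real.sqrt 3)*a*v) * hx'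
    · linear_combination ((1/4:ℝ)*g^2*v + (1/4:ℝ)*f^2*v + (-1/4:ℝ)*e*g*z + (-1/4:ℝ)*e*f*w + (-1/4:ℝ)*d*e*t + (1/4:ℝ)*d^2*v + (-1/4:ℝ)*c*e*r + (1/4:ℝ)*c^2*v + (-1/4:ℝ)*b*e*q + (1/4:ℝ)*b^2*v + (-1/4:ℝ)*a*e*p + (1/4:ℝ)*a^2*v) * hs + ((9/8:ℝ)*v + (9/8:ℝ)*e*g*z + (9/8:ℝ)*e*f*w + (9/8:ℝ)*e^2*v + (9/8:ℝ)*d*e*t + (9/8:ℝ)*c*e*r + (9/8:ℝ)*b*e*q + (-9/8:ℝ)*a*e*p + (3/8:ℝ)*(Real.sqrt 3)*g*q + (-3/8:ℝ)*(Real.sqrt 3)*f*r + (3/8:ℝ)*(Real.sqrt 3)*d*p + (3/8:ℝ)*(Real.sqrt 3)*c*w + (-3/8:ℝ)*(Real.sqrt 3)*b*z + (3/8:ℝ)*(Real.sqrt 3)*a*t) * hx'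
    · linear_combination ((1/4:ℝ)*g^2*w + (-1/4:ℝ)*f*g*z + (-1/4:ℝ)*e*f*v + (1/4:ℝ)*e^2*w + (-1/4:ℝ)*d*f*t + (1/4:ℝ)*d^2*w + (-1/4:ℝ)*c*f*r + (1/4:ℝ)*c^2*w + (-1/4:ℝ)*b*f*q + (1/4:ℝ)*b^2*w + (-1/4:ℝ)*a*f*p + (1/4:ℝ)*a^2*w) * hs + ((9/8:ℝ)*w + (9/8:ℝ)*f*g*z + (9/8:ℝ)*f^2*w + (9/8:ℝ)*e*f*v + (9/8:ℝ)*d*f*t + (9/8:ℝ)*c*f*r + (9/8:ℝ)*b*f*q + (-9/8:ℝ)*a*f*p + (3/8:ℝ)*(Real.sqrt 3)*g*p + (3/8:ℝ)*(Real.sqrt 3)*e*r + (-3/8:ℝ)*(Real.sqrt 3)*d*q + (-3/8:ℝ)*(Real.sqrt 3)*c*v + (3/8:ℝ)*(Real.sqrt 3)*b*t + (3/8:ℝ)*(Real.sqrt 3)*a*z) * hx'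
    · linear_combination ((-1/4:ℝ)*f*g*w + (1/4:ℝ)*f^2*z + (-1/4:ℝ)*e*g*v + (1/4:ℝ)*e^2*z + (-1/4:ℝ)*d*g*t + (1/4:ℝ)*d^2*z + (-1/4:ℝ)*c*g*r + (1/4:ℝ)*c^2*z + (-1/4:ℝ)*b*g*q + (1/4:ℝ)*b^2*z + (-1/4:ℝ)*a*g*p + (1/4:ℝ)*a^2*z) * hs + ((9/8:ℝ)*z + (9/8:ℝ)*g^2*z + (9/8:ℝ)*f*g*w + (9/8:ℝ)*e*g*v + (9/8:ℝ)*d*g*t + (9/8:ℝ)*c*g*r + (9/8:ℝ)*b*g*q + (-9/8:ℝ)*a*g*p + (-3/8:ℝ)*(Real.sqrt 3)*f*p + (-3/8:ℝ)*(Real.sqrt 3)*e*q + (-3/8:ℝ)*(Real.sqrt 3)*d*r + (3/8:ℝ)*(Real.sqrt 3)*c*t + (3/8:ℝ)*(Real.sqrt 3)*b*v + (-3/8:ℝ)*(Real.sqrt 3)*a*w) * hx'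
end
end

section
/- For each x ∈ S^6, the linear map f(x) on Im O ≅ ℝ^7 induced by conjugation by e0 + √3·x fixes x, i.e. f(x)x = x. -/
noncomputable section

/-- For `x ∈ S⁶`, the map `f(x)` induced by conjugation by `e0+√3x` fixes `x`. -/
theorem stmt5 (x : Octo) (him : Octo.re' x = 0) (hx : Octo.norm2 x = 1) :
    conjMap x x = x := by
  obtain ⟨a, b⟩ := x
  unfold conjMap Octo.mul' Octo.one' Octo.norm2 Octo.dot Octo.re' at *
  simp only at him
  rw [him] at hx
  have h3 : Real.sqrt 3 * Real.sqrt 3 = 3 := Real.mul_self_sqrt (by norm_num)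
  set s := Real.sqrt 3 with hs
  set N : ℝ := 0*0 + a.imI*a.imI + a.imJ*a.imJ + a.imK*a.imK + b.re*b.re + b.imI*b.imI + b.imJ*b.imJ + b.imK*b.imK with hN
  refine Prod.ext ?_ ?_ <;> refine QuaternionAlgebra.ext ?_ ?_ ?_ ?_ <;>
    simp only [Prod.smul_mk, Prod.mk_add_mk, Prod.mk_sub_mk, 
      QuaternionAlgebra.smul_mk, Quaternion.re_mul, Quaternion.imI_mul,
      Quaternion.imJ_mul, Quaternion.imK_mul, 
       QuaternionAlgebra.neg_mk, Quaternion.re_star,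
      Quaternion.imI_star, Quaternion.imJ_star, Quaternion.imK_star,
      Quaternion.re_one, Quaternion.imI_one, Quaternion.imJ_one, Quaternion.imK_one,
      Quaternion.re_zero, Quaternion.imI_zero, Quaternion.imJ_zero, Quaternion.imK_zero,
      Quaternion.re_add, Quaternion.imI_add, Quaternion.imJ_add, Quaternion.imK_add,
      Quaternion.re_sub, Quaternion.imI_sub, Quaternion.imJ_sub, Quaternion.imK_sub,
      Quaternion.re_neg, Quaternion.imI_neg, Quaternion.imJ_neg, Quaternion.imK_neg,
      Quaternion.re_smul, Quaternion.imI_smul, Quaternion.imJ_smul, Quaternion.imK_smul,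
      smul_eq_mul, Prod.fst_add, Prod.snd_add, Prod.fst_sub, Prod.snd_sub, Prod.smul_fst,
      Prod.smul_snd, him]
  · linear_combination (0*N/4) * h3 + (3*(0:ℝ)/4) * hx
  · linear_combination (a.imI*N/4) * h3 + (3*a.imI/4) * hx
  · linear_combination (a.imJ*N/4) * h3 + (3*a.imJ/4) * hx
  · linear_combination (a.imK*N/4) * h3 + (3*a.imK/4) * hx
  · linear_combination (b.re*N/4) * h3 + (3*b.re/4) * hx
  · linear_combination (b.imI*N/4) * h3 + (3*b.imI/4) * hx
  · linear_combination (b.imJ*N/4) * h3 + (3*b.imJ/4) * hx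
  · linear_combination (b.imK*N/4) * h3 + (3*b.imK/4) * hx
end
end

section
/- For each x ∈ S^6, the linear map f(x) on ℝ^7 ≅ Im O induced by conjugation by e0 + √3·x is orthogonal: it preserves the Euclidean inner product on Im O. -/
noncomputable section

/-- For `x ∈ S⁶`, the map `f(x)` on `Im 𝕆 ≅ ℝ⁷` induced by conjugation by
`e0+√3x` is orthogonal: it preserves the Euclidean inner product. -/
theorem stmt6 (x : Octo) (him : Octo.re' x = 0) (hx : Octo.norm2 x = 1) :
    ∀ u w : Octo, Octo.re' u = 0 → Octo.re' w = 0 →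
      Octo.dot (conjMap x u) (conjMap x w) = Octo.dot u w := by
  have h3 : Real.sqrt 3 * Real.sqrt 3 = 3 := Real.mul_self_sqrt (by norm_num)
  intro u w hu hw
  simp only [Octo.re', Octo.norm2, Octo.dot, conjMap, Octo.mul', Octo.one',
    Prod.fst, Prod.snd, Prod.smul_fst, Prod.smul_snd, Prod.fst_add, Prod.snd_add,
    Prod.fst_sub, Prod.snd_sub, Prod.mk_add_mk, Prod.mk_sub_mk,
    Quaternion.re_sub, Quaternion.imI_sub, Quaternion.imJ_sub, Quaternion.imK_sub,
    Quaternion.re_add, Quaternion.imI_add, Quaternion.imJ_add, Quaternion.imK_add,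
    Quaternion.re_mul, Quaternion.imI_mul, Quaternion.imJ_mul, Quaternion.imK_mul,
    Quaternion.re_smul, Quaternion.imI_smul, Quaternion.imJ_smul, Quaternion.imK_smul,
    Quaternion.re_star, Quaternion.imI_star, Quaternion.imJ_star, Quaternion.imK_star,
    Quaternion.re_one, Quaternion.imI_one, Quaternion.imJ_one, Quaternion.imK_one,
    Quaternion.re_zero, Quaternion.imI_zero, Quaternion.imJ_zero, Quaternion.imK_zero,
    Quaternion.re_neg, Quaternion.imI_neg, Quaternion.imJ_neg, Quaternion.imK_neg,
    smul_eq_mul] at *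
  obtain ⟨⟨x0,x1,x2,x3⟩,⟨x4,x5,x6,x7⟩⟩ := x
  obtain ⟨⟨u0,u1,u2,u3⟩,⟨u4,u5,u6,u7⟩⟩ := u
  obtain ⟨⟨w0,w1,w2,w3⟩,⟨w4,w5,w6,w7⟩⟩ := w
  dsimp only at *
  subst hu hw him
  set s := Real.sqrt 3 with hs
  set D := u1*w1+u2*w2+u3*w3+u4*w4+u5*w5+u6*w6+u7*w7 with hD
  set N := x1^2+x2^2+x3^2+x4^2+x5^2+x6^2+x7^2 with hN
  set_option maxRecDepth 100000 in
  linear_combination (D/16 * (s*s*N+5) * N) * h3 + (D/16 * (s*s*N+5) * 3) * hx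
end
end

section
/- Let H be a finite-dimensional complex inner product space, and let A, B ⊆ H be subspaces with orthogonal projections P, Q. Then the sequence (PQ)^j converges in operator norm to an idempotent whose range is A ∩ B; in particular, lim_{j→∞} trace((PQ)^j) = dim_ℂ(A ∩ B). -/
open Filter ContinuousLinearMap

section helpers

variable {H : Type*} [NormedAddCommGroup H] [InnerProductSpace ℂ H] [FiniteDimensional ℂ H]

noncomputable def pc (K : Submodule ℂ H) : H →L[ℂ] H := K.subtypeL ∘L K.orthogonalProjectionOnto

lemma pc_mem (K : Submodule ℂ H) (x : H) : pc K x ∈ K := (K.orthogonalProjectionOnto x).2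

lemma pc_eq_self {K : Submodule ℂ H} {x : H} (h : x ∈ K) : pc K x = x :=
  Submodule.starProjection_eq_self_iff.mpr h

lemma pc_norm_sq (K : Submodule ℂ H) (x : H) :
    ‖x‖ * ‖x‖ = ‖x - pc K x‖ * ‖x - pc K x‖ + ‖pc K x‖ * ‖pc K x‖ := by
  have := Submodule.orthogonalProjectionFn_norm_sq K x
  rwa [Submodule.orthogonalProjectionFn_eq] at this

lemma pc_norm_le (K : Submodule ℂ H) (x : H) : ‖pc K x‖ ≤ ‖x‖ := by
  have h := pc_norm_sq K x
  nlinarith [norm_nonneg (x - pc K x), norm_nonneg (pc K x), norm_nonneg x]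

lemma pc_sub_norm_le (K : Submodule ℂ H) (x : H) : ‖x - pc K x‖ ≤ ‖x‖ := by
  have h := pc_norm_sq K x
  nlinarith [norm_nonneg (x - pc K x), norm_nonneg (pc K x), norm_nonneg x]

lemma pc_eq_of_norm_eq {K : Submodule ℂ H} {x : H} (h : ‖pc K x‖ = ‖x‖) : pc K x = x := by
  have h2 := pc_norm_sq K x
  rw [h] at h2
  have h3 : ‖x - pc K x‖ * ‖x - pc K x‖ = 0 := by linarith
  have := norm_eq_zero.mp (mul_self_eq_zero.mp h3)
  linear_combination (norm := abel) -this

lemma exists_norm_apply_eq (T : H →L[ℂ] H) : ∃ x : H, ‖x‖ ≤ 1 ∧ ‖T x‖ = ‖T‖ := by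
  obtain ⟨x, hx, hmax⟩ := (isCompact_closedBall (0 : H) 1).exists_isMaxOn
    ⟨0, by simp⟩ (continuous_norm.comp T.continuous).continuousOn
  refine ⟨x, by simpa [dist_eq_norm] using hx,
    le_antisymm (T.unit_le_opNorm x (by simpa [dist_eq_norm] using hx)) ?_⟩
  refine T.opNorm_le_bound (norm_nonneg _) fun y => ?_
  rcases eq_or_ne y 0 with rfl | hy
  · simp
  · have hz : (‖y‖⁻¹ • y) ∈ Metric.closedBall (0 : H) 1 := by
      simp [norm_smul, dist_eq_norm, inv_mul_cancel₀ (norm_ne_zero_iff.mpr hy)]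
    have := hmax hz
    simp only [Set.mem_setOf_eq, Function.comp_apply, T.map_smul_of_tower, norm_smul, norm_inv,
      norm_norm] at this
    have hyn : (0:ℝ) < ‖y‖ := norm_pos_iff.mpr hy
    calc ‖T y‖ = ‖y‖ * (‖y‖⁻¹ * ‖T y‖) := by field_simp
    _ ≤ ‖y‖ * ‖T x‖ := by nlinarith
    _ = ‖T x‖ * ‖y‖ := mul_comm _ _

lemma vnp_norm_lt (A B : Submodule ℂ H) : ‖pc A ∘L pc B - pc (A ⊓ B)‖ < 1 := by
  obtain ⟨x, hx1, hx2⟩ := exists_norm_apply_eq (pc A ∘L pc B - pc (A ⊓ B))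
  by_contra hc
  push_neg at hc
  set y := x - pc (A ⊓ B) x with hy_def
  have hT : (pc A ∘L pc B - pc (A ⊓ B)) x = pc A (pc B y) := by
    have h1 : pc B (pc (A ⊓ B) x) = pc (A ⊓ B) x :=
      pc_eq_self ((pc_mem (A ⊓ B) x).2)
    have h2 : pc A (pc (A ⊓ B) x) = pc (A ⊓ B) x :=
      pc_eq_self ((pc_mem (A ⊓ B) x).1)
    simp only [sub_apply, comp_apply, hy_def, map_sub, h1, h2]
  have hyb : ‖y‖ ≤ 1 := le_trans (pc_sub_norm_le _ x) hx1
  have h1 : (1:ℝ) ≤ ‖pc A (pc B y)‖ := by rw [← hT, hx2]; exact hc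
  have h2 : ‖pc A (pc B y)‖ ≤ ‖pc B y‖ := pc_norm_le _ _
  have h3 : ‖pc B y‖ ≤ ‖y‖ := pc_norm_le _ _
  have hQ : pc B y = y := pc_eq_of_norm_eq (le_antisymm h3 (by linarith))
  rw [hQ] at h1 h2
  have hP : pc A y = y := pc_eq_of_norm_eq (le_antisymm (pc_norm_le _ _) (by linarith))
  have hyA : y ∈ A := hP ▸ pc_mem A y
  have hyB : y ∈ B := hQ ▸ pc_mem B y
  have hyperp : y ∈ (A ⊓ B)ᗮ := Submodule.sub_starProjection_mem_orthogonal x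
  have : y = 0 := by
    have := (Submodule.orthogonal_disjoint (A ⊓ B)).le_bot
      (Submodule.mem_inf.mpr ⟨Submodule.mem_inf.mpr ⟨hyA, hyB⟩, hyperp⟩)
    exact (Submodule.mem_bot ℂ).mp this
  have h4 : (1:ℝ) ≤ ‖y‖ := le_trans h1 h2
  rw [this, norm_zero] at h4
  linarith

lemma vnp_mul_E (A B : Submodule ℂ H) :
    (pc A ∘L pc B) * pc (A ⊓ B) = pc (A ⊓ B) := by
  ext x
  simp only [ContinuousLinearMap.mul_apply, comp_apply]
  rw [pc_eq_self ((pc_mem (A ⊓ B) x).2), pc_eq_self ((pc_mem (A ⊓ B) x).1)]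

lemma vnp_E_mul (A B : Submodule ℂ H) :
    pc (A ⊓ B) * (pc A ∘L pc B) = pc (A ⊓ B) := by
  ext x
  have h1 : (A ⊓ B).orthogonalProjectionOnto
      (A.starProjection (B.starProjection x)) =
      (A ⊓ B).orthogonalProjectionOnto x := by
    rw [Submodule.orthogonalProjectionOnto_starProjection_of_le inf_le_left,
      Submodule.orthogonalProjectionOnto_starProjection_of_le inf_le_right]
  exact congrArg Subtype.val h1

lemma vnp_E_mul_E (A B : Submodule ℂ H) : pc (A ⊓ B) * pc (A ⊓ B) = pc (A ⊓ B) := by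
  ext x
  exact pc_eq_self (pc_mem _ x)

lemma vnp_pow (A B : Submodule ℂ H) (j : ℕ) :
    (pc A ∘L pc B) ^ (j + 1) = (pc A ∘L pc B - pc (A ⊓ B)) ^ (j + 1) + pc (A ⊓ B) := by
  set f := pc A ∘L pc B with hf
  set E := pc (A ⊓ B) with hE
  have hET : E * (f - E) = 0 := by
    rw [mul_sub, hf, hE, vnp_E_mul A B, vnp_E_mul_E A B, sub_self]
  induction j with
  | zero => rw [pow_one, pow_one, sub_add_cancel]
  | succ k ih =>
    have hzero : E * (f - E) ^ (k + 1) = 0 := by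
      rw [pow_succ', ← mul_assoc, hET, zero_mul]
    calc f ^ (k + 1 + 1) = f * f ^ (k + 1) := (pow_succ' f (k + 1))
    _ = f * ((f - E) ^ (k + 1) + E) := by rw [ih]
    _ = (f - E) * (f - E) ^ (k + 1) + E * (f - E) ^ (k + 1) + f * E := by noncomm_ring
    _ = (f - E) ^ (k + 1 + 1) + E := by
        rw [hzero, hf, hE, vnp_mul_E A B, ← pow_succ', add_zero]

end helpers


/-- Von Neumann's alternating projection theorem in finite dimensions: for
subspaces `A, B` of a finite-dimensional complex inner product space with
orthogonal projections `P, Q`, the powers `(PQ)ʲ` converge in operator norm to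
an idempotent with range `A ∩ B`, and `trace((PQ)ʲ) → dim (A ∩ B)`. -/
theorem stmt10 {H : Type*} [NormedAddCommGroup H] [InnerProductSpace ℂ H]
    [FiniteDimensional ℂ H] (A B : Submodule ℂ H) :
    ∃ E : H →L[ℂ] H,
      Tendsto
        (fun j : ℕ =>
          ((A.subtypeL ∘L A.orthogonalProjectionOnto) ∘L
            (B.subtypeL ∘L B.orthogonalProjectionOnto)) ^ j)
        atTop (nhds E) ∧
      E ∘L E = E ∧
      LinearMap.range (E : H →ₗ[ℂ] H) = A ⊓ B ∧
      Tendsto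
        (fun j : ℕ =>
          LinearMap.trace ℂ H
            ((((A.subtypeL ∘L A.orthogonalProjectionOnto) ∘L
              (B.subtypeL ∘L B.orthogonalProjectionOnto)) ^ j : H →L[ℂ] H) :
                H →ₗ[ℂ] H))
        atTop (nhds ((Module.finrank ℂ ↥(A ⊓ B) : ℂ))) := by
  have hconv : Tendsto (fun j : ℕ => (pc A ∘L pc B) ^ j) atTop (nhds (pc (A ⊓ B))) := by
    rw [tendsto_iff_norm_sub_tendsto_zero]
    have hlt := vnp_norm_lt A B
    have hnn : (0:ℝ) ≤ ‖pc A ∘L pc B - pc (A ⊓ B)‖ := norm_nonneg _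
    refine squeeze_zero' (Eventually.of_forall fun j => norm_nonneg _) ?_
      (tendsto_pow_atTop_nhds_zero_of_lt_one hnn hlt)
    filter_upwards [eventually_ge_atTop 1] with j hj
    obtain ⟨m, rfl⟩ := Nat.exists_eq_add_of_le hj
    rw [add_comm 1 m, vnp_pow A B m, add_sub_cancel_right]
    exact norm_pow_le' _ (by omega)
  refine ⟨pc (A ⊓ B), hconv, vnp_E_mul_E A B, ?_, ?_⟩
  · refine le_antisymm ?_ ?_
    · rintro _ ⟨x, rfl⟩
      exact pc_mem _ x
    · intro x hx
      exact ⟨x, pc_eq_self hx⟩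
  · have hproj : LinearMap.IsProj (A ⊓ B) ((pc (A ⊓ B) : H →L[ℂ] H) : H →ₗ[ℂ] H) :=
      ⟨fun x => pc_mem _ x, fun x hx => pc_eq_self hx⟩
    have htr := hproj.trace
    let L : (H →L[ℂ] H) →ₗ[ℂ] ℂ := (LinearMap.trace ℂ H) ∘ₗ (ContinuousLinearMap.coeLM ℂ)
    have hLc : Continuous L := L.continuous_of_finiteDimensional
    have h := (hLc.tendsto (pc (A ⊓ B))).comp hconv
    rw [show L (pc (A ⊓ B)) = ((Module.finrank ℂ ↥(A ⊓ B) : ℂ)) from htr] at h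
    exact h
end
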